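/- For every integer p ≥ 2, Σ_{j=1}^{p−1} C(p,j) · B(2j, 2(p−j)) / ((2j−1)(2(p−j)−1)) ≤ 5 / ((2p−1)(2p−2)), where C(p,j) is the binomial coefficient and B is the Beta function. -/

import Mathlib

lemma aux_choose_shift (m n k : ℕ) : n.choose k ≤ (n + m).choose (k + m) := by
  induction m with
  | zero => simp
  | succ m ih =>
      calc n.choose k ≤ (n + m).choose (k + m) := ih
        _ ≤ (n + m + 1).choose (k + m + 1) := by
            rw [Nat.choose_succ_succ]; exact Nat.le_add_right _ _

lemma middle_bound (p j : ℕ) (h2 : 2 ≤ j) (hj : j + 2 ≤ p) :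
    p.choose j * (2 * j - 2).factorial * (2 * (p - j) - 2).factorial ≤ (2 * p - 4).factorial := by
  have h1 : p.choose j ≤ (2 * p - 4).choose (2 * j - 2) := by
    have e1 : p.choose j ≤ (p + (j - 2)).choose (j + (j - 2)) := aux_choose_shift _ _ _
    have e2 : j + (j - 2) = 2 * j - 2 := by omega
    have e3 : (p + (j - 2)).choose (2 * j - 2) ≤ (2 * p - 4).choose (2 * j - 2) :=
      Nat.choose_le_choose _ (by omega)
    rw [e2] at e1; exact e1.trans e3
  have key : (2 * p - 4).choose (2 * j - 2) * (2 * j - 2).factorial * (2 * (p - j) - 2).factorial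
      = (2 * p - 4).factorial := by
    have h4 : 2 * j - 2 ≤ 2 * p - 4 := by omega
    have := Nat.choose_mul_factorial_mul_factorial h4
    have e : 2 * p - 4 - (2 * j - 2) = 2 * (p - j) - 2 := by omega
    rw [e] at this; exact this
  calc p.choose j * (2 * j - 2).factorial * (2 * (p - j) - 2).factorial
      ≤ (2 * p - 4).choose (2 * j - 2) * (2 * j - 2).factorial * (2 * (p - j) - 2).factorial := by
        exact Nat.mul_le_mul_right _ (Nat.mul_le_mul_right _ h1)
    _ = (2 * p - 4).factorial := key

lemma nat_sum_bound (p : ℕ) (hp : 2 ≤ p) :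
    ∑ j ∈ Finset.Icc 1 (p - 1),
      p.choose j * (2 * j - 2).factorial * (2 * (p - j) - 2).factorial
      ≤ 5 * (2 * p - 3).factorial := by
  obtain ⟨q, rfl⟩ : ∃ q, p = q + 2 := ⟨p - 2, by omega⟩
  have hbound : ∀ j ∈ Finset.Icc 1 (q + 2 - 1),
      (q + 2).choose j * (2 * j - 2).factorial * (2 * ((q + 2) - j) - 2).factorial ≤
        (2 * q).factorial +
        ((if j = 1 then (q + 1) * (2 * q).factorial else 0) +
         (if j = q + 1 then (q + 1) * (2 * q).factorial else 0)) := by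
    intro j hj
    simp only [Finset.mem_Icc] at hj
    by_cases h1 : j = 1
    · subst h1
      have e1 : 2 * 1 - 2 = 0 := rfl
      have e2 : 2 * ((q + 2) - 1) - 2 = 2 * q := by omega
      rw [e1, e2, Nat.choose_one_right, Nat.factorial_zero, mul_one]
      simp only [if_pos rfl]
      have h : (q + 2) * (2 * q).factorial ≤
          (2 * q).factorial + (q + 1) * (2 * q).factorial := by ring_nf; omega
      exact h.trans (by rw [← add_assoc]; exact Nat.le_add_right _ _)
    · by_cases h2 : j = q + 1
      · subst h2
        have e1 : 2 * (q + 1) - 2 = 2 * q := by omega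
        have e2 : (q + 2) - (q + 1) = 1 := by omega
        have e3 : 2 * 1 - 2 = 0 := rfl
        rw [e1, e2, e3, Nat.factorial_zero, mul_one]
        have hc : (q + 2).choose (q + 1) = q + 2 := by
          have h4 := Nat.choose_symm (by omega : q + 1 ≤ q + 2)
          rw [e2] at h4
          rw [← h4, Nat.choose_one_right]
        rw [hc]
        simp only [if_neg h1, if_pos rfl]
        have h : (q + 2) * (2 * q).factorial ≤
            (2 * q).factorial + (q + 1) * (2 * q).factorial := by ring_nf; omega
        rw [zero_add]; exact h
      · have h := middle_bound (q + 2) j (by omega) (by omega)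
        have e : 2 * (q + 2) - 4 = 2 * q := by omega
        rw [e] at h
        simp only [if_neg h1, if_neg h2]
        omega
  calc ∑ j ∈ Finset.Icc 1 (q + 2 - 1),
        (q + 2).choose j * (2 * j - 2).factorial * (2 * ((q + 2) - j) - 2).factorial
      ≤ ∑ j ∈ Finset.Icc 1 (q + 2 - 1),
          ((2 * q).factorial +
          ((if j = 1 then (q + 1) * (2 * q).factorial else 0) +
           (if j = q + 1 then (q + 1) * (2 * q).factorial else 0))) :=
        Finset.sum_le_sum hbound
    _ ≤ 5 * (2 * (q + 2) - 3).factorial := by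
        rw [Finset.sum_add_distrib, Finset.sum_add_distrib, Finset.sum_const,
          Nat.card_Icc, Finset.sum_ite_eq' _ 1, Finset.sum_ite_eq' _ (q + 1)]
        have m1 : (1 : ℕ) ∈ Finset.Icc 1 (q + 2 - 1) := by simp
        have m2 : q + 1 ∈ Finset.Icc 1 (q + 2 - 1) := by simp
        rw [if_pos m1, if_pos m2]
        have hfac : (2 * (q + 2) - 3).factorial = (2 * q + 1) * (2 * q).factorial := by
          have e : 2 * (q + 2) - 3 = 2 * q + 1 := by omega
          rw [e, Nat.factorial_succ]
        rw [hfac, smul_eq_mul]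
        have hpos := (2 * q).factorial_pos
        have e : q + 2 - 1 + 1 - 1 = q + 1 := by omega
        rw [e]
        nlinarith [hpos]

/-- The Beta function `B(α,β) = Γ(α)Γ(β)/Γ(α+β)`. -/
noncomputable def realBeta (a b : ℝ) : ℝ := Real.Gamma a * Real.Gamma b / Real.Gamma (a + b)

theorem stmt17 (p : ℕ) (hp : 2 ≤ p) :
    ∑ j ∈ Finset.Icc 1 (p - 1),
        (p.choose j : ℝ) * realBeta ((2 * j : ℕ) : ℝ) ((2 * (p - j) : ℕ) : ℝ) /
          ((2 * (j : ℝ) - 1) * (2 * ((p : ℝ) - (j : ℝ)) - 1)) ≤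
      5 / ((2 * (p : ℝ) - 1) * (2 * (p : ℝ) - 2)) := by
  have hstep : ∀ j ∈ Finset.Icc 1 (p - 1),
      (p.choose j : ℝ) * realBeta ((2 * j : ℕ) : ℝ) ((2 * (p - j) : ℕ) : ℝ) /
          ((2 * (j : ℝ) - 1) * (2 * ((p : ℝ) - (j : ℝ)) - 1)) =
      ((p.choose j * (2 * j - 2).factorial * (2 * (p - j) - 2).factorial : ℕ) : ℝ) /
        ((2 * p - 1).factorial : ℝ) := by
    intro j hj
    simp only [Finset.mem_Icc] at hj
    obtain ⟨hj1, hj2⟩ := hj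
    set k := p - j with hk
    have hk1 : 1 ≤ k := by omega
    have hjk : j + k = p := by omega
    obtain ⟨b, hb⟩ : ∃ b, 2 * j = b + 2 := ⟨2 * j - 2, by omega⟩
    obtain ⟨c, hc⟩ : ∃ c, 2 * k = c + 2 := ⟨2 * k - 2, by omega⟩
    have hb2 : 2 * j - 2 = b := by omega
    have hc2 : 2 * k - 2 = c := by omega
    have hG1 : Real.Gamma ((2 * j : ℕ) : ℝ) = ((b + 1).factorial : ℝ) := by
      have e : ((2 * j : ℕ) : ℝ) = ((b + 1 : ℕ) : ℝ) + 1 := by rw [hb]; push_cast; ring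
      rw [e, Real.Gamma_nat_eq_factorial]
    have hG2 : Real.Gamma ((2 * k : ℕ) : ℝ) = ((c + 1).factorial : ℝ) := by
      have e : ((2 * k : ℕ) : ℝ) = ((c + 1 : ℕ) : ℝ) + 1 := by rw [hc]; push_cast; ring
      rw [e, Real.Gamma_nat_eq_factorial]
    have hG3 : Real.Gamma (((2 * j : ℕ) : ℝ) + ((2 * k : ℕ) : ℝ)) =
        ((b + c + 3).factorial : ℝ) := by
      have e : ((2 * j : ℕ) : ℝ) + ((2 * k : ℕ) : ℝ) = ((b + c + 3 : ℕ) : ℝ) + 1 := by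
        rw [hb, hc]; push_cast; ring
      rw [e, Real.Gamma_nat_eq_factorial]
    have hfacp : (2 * p - 1).factorial = (b + c + 3).factorial := by
      congr 1; omega
    have hjR : 2 * (j : ℝ) - 1 = (b : ℝ) + 1 := by
      have : ((2 * j : ℕ) : ℝ) = ((b + 2 : ℕ) : ℝ) := by rw [hb]
      push_cast at this; linarith
    have hkR : 2 * ((p : ℝ) - (j : ℝ)) - 1 = (c : ℝ) + 1 := by
      have hpj : (p : ℝ) - (j : ℝ) = (k : ℝ) := by
        have : ((j + k : ℕ) : ℝ) = (p : ℝ) := by rw [hjk]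
        push_cast at this; linarith
      have : ((2 * k : ℕ) : ℝ) = ((c + 2 : ℕ) : ℝ) := by rw [hc]
      push_cast at this; rw [hpj]; linarith
    rw [realBeta, hG1, hG2, hG3, hjR, hkR, hfacp, hb2, hc2]
    have hf1 : ((b + 1).factorial : ℝ) = ((b : ℝ) + 1) * (b.factorial : ℝ) := by
      rw [Nat.factorial_succ]; push_cast; ring
    have hf2 : ((c + 1).factorial : ℝ) = ((c : ℝ) + 1) * (c.factorial : ℝ) := by
      rw [Nat.factorial_succ]; push_cast; ring
    have hb1 : (b : ℝ) + 1 ≠ 0 := by positivity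
    have hc1 : (c : ℝ) + 1 ≠ 0 := by positivity
    have hfne : ((b + c + 3).factorial : ℝ) ≠ 0 := by
      exact_mod_cast (b + c + 3).factorial_pos.ne'
    rw [hf1, hf2]
    push_cast
    field_simp
  rw [Finset.sum_congr rfl hstep, ← Finset.sum_div, ← Nat.cast_sum]
  have hp1 : (0 : ℝ) < ((2 * p - 1).factorial : ℝ) := by
    exact_mod_cast (2 * p - 1).factorial_pos
  obtain ⟨d, hd⟩ : ∃ d, 2 * p = d + 3 := ⟨2 * p - 3, by omega⟩
  have hd3 : 2 * p - 3 = d := by omega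
  have hd1 : 2 * p - 1 = d + 2 := by omega
  calc ((∑ j ∈ Finset.Icc 1 (p - 1),
        p.choose j * (2 * j - 2).factorial * (2 * (p - j) - 2).factorial : ℕ) : ℝ) /
          ((2 * p - 1).factorial : ℝ)
      ≤ ((5 * (2 * p - 3).factorial : ℕ) : ℝ) / ((2 * p - 1).factorial : ℝ) := by
        gcongr
        exact_mod_cast nat_sum_bound p hp
    _ = 5 / ((2 * (p : ℝ) - 1) * (2 * (p : ℝ) - 2)) := by
        rw [hd3, hd1]
        have hpR : 2 * (p : ℝ) = (d : ℝ) + 3 := by exact_mod_cast congrArg (Nat.cast : ℕ → ℝ) hd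
        have hf : ((d + 2).factorial : ℝ) =
            ((d : ℝ) + 2) * (((d : ℝ) + 1) * (d.factorial : ℝ)) := by
          rw [Nat.factorial_succ, Nat.factorial_succ]; push_cast; ring
        have h1 : (d : ℝ) + 2 ≠ 0 := by positivity
        have h2 : (d : ℝ) + 1 ≠ 0 := by positivity
        have h3 : (d.factorial : ℝ) ≠ 0 := by exact_mod_cast d.factorial_pos.ne'
        rw [hpR]
        rw [show ((d : ℝ) + 3 - 1) * ((d : ℝ) + 3 - 2) = ((d : ℝ) + 2) * ((d : ℝ) + 1) by ring,
          hf]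
        push_cast
        rw [div_eq_div_iff (by positivity) (by positivity)]
        ring
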